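/- Let d ≥ 2, let X be a random vector in ℝ^{d−1} whose law has density f_X with respect to Lebesgue measure, and let ζ be a random variable independent of X with P(ζ = 1) = P(ζ = −1) = 1/2. Define the S^{d−1}-valued random vector Θ = ζ (1, X)/‖(1, X)‖, where (1, X) = (1, X₁, …, X_{d−1}) ∈ ℝ^d. Then the law of Θ is absolutely continuous with respect to the surface measure σ on S^{d−1} with density p(θ) = (2|θ₁|^d)^{−1} f_X(θ₂/θ₁, …, θ_d/θ₁) for θ₁ ≠ 0 (and p(θ) = 0 for θ₁ = 0); that is, for every bounded measurable g : S^{d−1} → ℝ, E[g(Θ)] = ∫_{S^{d−1}} g(θ) p(θ) dσ(θ). -/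

import Mathlib

open MeasureTheory
open scoped RealInnerProductSpace

noncomputable def auxVec (m : ℕ) (x : EuclideanSpace ℝ (Fin m)) : EuclideanSpace ℝ (Fin (m+1)) :=
  (WithLp.equiv 2 (∀ _ : Fin (m + 1), ℝ)).symm (Fin.cons 1 (fun j => x j))

noncomputable def auxDir (m : ℕ) (x : EuclideanSpace ℝ (Fin m)) : EuclideanSpace ℝ (Fin (m+1)) :=
  ‖auxVec m x‖⁻¹ • auxVec m x

open scoped Classical in
noncomputable def auxG (m : ℕ) (fX : EuclideanSpace ℝ (Fin m) → ℝ)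
    (φ : EuclideanSpace ℝ (Fin (m+1)) → ℝ) (y : EuclideanSpace ℝ (Fin (m+1))) : ℝ :=
  if y 0 ≠ 0 ∧ ‖y‖ ≤ 1 then
    φ (‖y‖⁻¹ • y) * ((2 * |y 0| ^ (m+1))⁻¹ * fX (WithLp.toLp 2 (fun j : Fin m => y j.succ / y 0))) * ‖y‖
  else 0

lemma measurable_apply0 (m : ℕ) : Measurable (fun y : EuclideanSpace ℝ (Fin (m+1)) => y 0) :=
  (measurable_pi_apply 0).comp (MeasurableEquiv.toLp 2 (Fin (m+1) → ℝ)).symm.measurable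

lemma measurable_ratio (m : ℕ) :
    Measurable (fun y : EuclideanSpace ℝ (Fin (m+1)) =>
      (WithLp.toLp 2 (fun j : Fin m => y j.succ / y 0))) :=
  (MeasurableEquiv.toLp 2 (Fin m → ℝ)).measurable.comp
    (measurable_pi_lambda _ fun j =>
      (((measurable_pi_apply j.succ).comp
        (MeasurableEquiv.toLp 2 (Fin (m+1) → ℝ)).symm.measurable).div (measurable_apply0 m)))

lemma auxG_meas (m : ℕ) (fX : EuclideanSpace ℝ (Fin m) → ℝ) (hfX : Measurable fX)
    (φ : EuclideanSpace ℝ (Fin (m+1)) → ℝ) (hφ : Measurable φ) :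
    Measurable (auxG m fX φ) := by
  classical
  unfold auxG
  have hset : MeasurableSet {y : EuclideanSpace ℝ (Fin (m+1)) | y 0 ≠ 0 ∧ ‖y‖ ≤ 1} := by
    refine MeasurableSet.inter ?_ ?_
    · exact ((measurable_apply0 m) (measurableSet_singleton 0)).compl
    · exact measurableSet_le measurable_norm measurable_const
  refine Measurable.ite hset ?_ measurable_const
  exact ((hφ.comp (measurable_norm.inv.smul measurable_id)).mul
    ((measurable_const.mul (((measurable_apply0 m).abs).pow_const (m+1))).inv.mul
      (hfX.comp (measurable_ratio m)))).mul measurable_norm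

lemma auxVol {m : ℕ} {fX : EuclideanSpace ℝ (Fin m) → ℝ}
    {φ : EuclideanSpace ℝ (Fin (m+1)) → ℝ}
    (hfX_meas : Measurable fX) (hfX_nonneg : ∀ x, 0 ≤ fX x)
    (hφ : Measurable φ) (hφ0 : ∀ y, 0 ≤ φ y)
    (hGmeas : Measurable (auxG m fX φ)) :
    ∫⁻ y, ENNReal.ofReal (auxG m fX φ y)
      = (∫⁻ x, ENNReal.ofReal (fX x * φ (auxDir m x))) / 2
      + (∫⁻ x, ENNReal.ofReal (fX x * φ (-auxDir m x))) / 2 := by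
  classical
  set W : (Fin m → ℝ) → EuclideanSpace ℝ (Fin (m+1)) :=
    fun x => (WithLp.equiv 2 (∀ _ : Fin (m + 1), ℝ)).symm (Fin.cons 1 x) with hWdef
  have hWmeas : Measurable W := by
    refine (MeasurableEquiv.toLp 2 (Fin (m+1) → ℝ)).measurable.comp
      (measurable_pi_lambda _ fun j => ?_)
    refine Fin.cases ?_ (fun i => ?_) j
    · simpa using measurable_const
    · simpa using measurable_pi_apply i
  have hWnorm : ∀ x, (0:ℝ) < ‖W x‖ := by
    intro x; rw [norm_pos_iff]; intro h
    have h0 := congrArg (fun y : EuclideanSpace ℝ (Fin (m+1)) => y 0) h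
    simp [hWdef] at h0
  set ud : (Fin m → ℝ) → EuclideanSpace ℝ (Fin (m+1)) := fun x => ‖W x‖⁻¹ • W x with huddef
  have hudmeas : Measurable ud := (hWmeas.norm.inv).smul hWmeas
  set dP : (Fin m → ℝ) → ENNReal := fun x =>
    ENNReal.ofReal (fX (WithLp.toLp 2 (fun j => x j)) * φ (ud x) * (‖W x‖ / 2)) with hdPdef
  set dM : (Fin m → ℝ) → ENNReal := fun x =>
    ENNReal.ofReal (fX (WithLp.toLp 2 (fun j => x j)) * φ (-ud x) * (‖W x‖ / 2)) with hdMdef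
  have hfXpi : Measurable fun x : Fin m → ℝ => fX (WithLp.toLp 2 (fun j => x j)) :=
    hfX_meas.comp (MeasurableEquiv.toLp 2 (Fin m → ℝ)).measurable
  have hdPmeas : Measurable dP :=
    ((hfXpi.mul (hφ.comp hudmeas)).mul (hWmeas.norm.div measurable_const)).ennreal_ofReal
  have hdMmeas : Measurable dM :=
    ((hfXpi.mul (hφ.comp hudmeas.neg)).mul (hWmeas.norm.div measurable_const)).ennreal_ofReal
  set Φ : ℝ → (Fin m → ℝ) → ENNReal := fun t x =>
    (if 0 < t ∧ t ≤ ‖W x‖⁻¹ then dP x else 0)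
      + (if -‖W x‖⁻¹ ≤ t ∧ t < 0 then dM x else 0) with hΦdef
  have hψ : Measurable fun y => ENNReal.ofReal (auxG m fX φ y) := hGmeas.ennreal_ofReal
  -- transport to product
  have hT : MeasurePreserving (fun p : ℝ × (Fin m → ℝ) =>
      (MeasurableEquiv.toLp 2 (Fin (m+1) → ℝ))
        ((MeasurableEquiv.piFinSuccAbove (fun _ : Fin (m+1) => ℝ) 0).symm p)) volume volume :=
    ((EuclideanSpace.volume_preserving_symm_measurableEquiv_toLp (Fin (m+1))).symm _).comp
      ((measurePreserving_piFinSuccAbove (fun _ : Fin (m+1) => (volume : Measure ℝ)) 0).symm _)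
  have hTval : ∀ (t : ℝ) (x : Fin m → ℝ),
      (MeasurableEquiv.toLp 2 (Fin (m+1) → ℝ))
        ((MeasurableEquiv.piFinSuccAbove (fun _ : Fin (m+1) => ℝ) 0).symm (t, x))
        = (WithLp.equiv 2 (∀ _ : Fin (m + 1), ℝ)).symm (Fin.cons t x) := by
    intro t x
    simp [MeasurableEquiv.piFinSuccAbove_symm_apply, Fin.insertNth_zero']
    rfl
  have step1 : ∫⁻ y, ENNReal.ofReal (auxG m fX φ y)
      = ∫⁻ t : ℝ, ∫⁻ x : Fin m → ℝ, ENNReal.ofReal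
          (auxG m fX φ ((WithLp.equiv 2 (∀ _ : Fin (m + 1), ℝ)).symm (Fin.cons t x))) := by
    rw [← hT.lintegral_comp hψ]
    refine (lintegral_prod _ ((hψ.comp hT.measurable).aemeasurable)).trans ?_
    exact lintegral_congr fun t => lintegral_congr fun x =>
      congrArg (fun z => ENNReal.ofReal (auxG m fX φ z)) (hTval t x)
  have key_sub : ∀ (F : (Fin m → ℝ) → ENNReal), Measurable F → ∀ t : ℝ, t ≠ 0 →
      ∫⁻ x, F x = ENNReal.ofReal (|t| ^ m) * ∫⁻ x, F (t • x) := by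
    intro F hF t ht
    have hsm : Measurable fun x : Fin m → ℝ => t • x := (continuous_const_smul t).measurable
    have h1 : ∫⁻ x, F (t • x) = ∫⁻ y, F y ∂(Measure.map (t • ·) volume) :=
      (lintegral_map hF hsm).symm
    rw [h1, Measure.map_addHaar_smul volume ht, Module.finrank_fin_fun, lintegral_smul_measure, smul_eq_mul,
      ← mul_assoc, ← ENNReal.ofReal_mul (by positivity), abs_inv, abs_pow,
      mul_inv_cancel₀ (by positivity), ENNReal.ofReal_one, one_mul]
  have hWt : ∀ t : ℝ, Measurable fun x : Fin m → ℝ =>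
      ((WithLp.equiv 2 (∀ _ : Fin (m + 1), ℝ)).symm (Fin.cons t x) :
        EuclideanSpace ℝ (Fin (m+1))) := by
    intro t
    refine (MeasurableEquiv.toLp 2 (Fin (m+1) → ℝ)).measurable.comp
      (measurable_pi_lambda _ fun j => ?_)
    refine Fin.cases ?_ (fun i => ?_) j
    · simpa using measurable_const
    · simpa using measurable_pi_apply i
  have hsmul : ∀ (t : ℝ) (x : Fin m → ℝ),
      ((WithLp.equiv 2 (∀ _ : Fin (m + 1), ℝ)).symm (Fin.cons t (t • x)) :
        EuclideanSpace ℝ (Fin (m+1))) = t • W x := by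
    intro t x
    rw [hWdef]
    show WithLp.toLp 2 _ = t • WithLp.toLp 2 _
    rw [← WithLp.toLp_smul]
    congr 1
    funext j
    refine Fin.cases ?_ ?_ j <;> simp
  have realid : ∀ s A C N : ℝ, 0 < s →
      s ^ m * (A * ((2 * s ^ (m+1))⁻¹ * C) * (s * N)) = C * A * (N / 2) := by
    intro s A C N hs
    have h1 : s ^ (m+1) ≠ 0 := by positivity
    field_simp
    ring
  have hpoint : ∀ (t : ℝ), t ≠ 0 → ∀ (x : Fin m → ℝ),
      ENNReal.ofReal (|t| ^ m) * ENNReal.ofReal (auxG m fX φ (t • W x)) = Φ t x := by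
    intro t ht x
    have hN := hWnorm x
    have hy0 : (t • W x) 0 = t := by simp [hWdef, PiLp.smul_apply]
    have hyn : ‖t • W x‖ = |t| * ‖W x‖ := by rw [norm_smul, Real.norm_eq_abs]
    have hratio : WithLp.toLp 2 (fun j : Fin m => (t • W x) j.succ / (t • W x) 0)
        = WithLp.toLp 2 (fun j => x j) := by
      congr 1
      funext j
      have h1 : (t • W x) j.succ = t * x j := by simp [hWdef, PiLp.smul_apply]
      rw [h1, hy0, mul_div_cancel_left₀ _ ht]
    by_cases hle : ‖t • W x‖ ≤ 1
    · have hcond : (t • W x) 0 ≠ 0 ∧ ‖t • W x‖ ≤ 1 := ⟨by rw [hy0]; exact ht, hle⟩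
      have hval : auxG m fX φ (t • W x)
          = φ (‖t • W x‖⁻¹ • (t • W x))
              * ((2 * |t| ^ (m+1))⁻¹ * fX (WithLp.toLp 2 (fun j => x j))) * (|t| * ‖W x‖) := by
        unfold auxG
        rw [if_pos hcond, hratio, hy0, hyn]
      have hlet : |t| * ‖W x‖ ≤ 1 := by rw [← hyn]; exact hle
      rcases ht.lt_or_gt with htn | htp
      · -- t < 0
        have habs : |t| = -t := abs_of_neg htn
        have harg : ‖t • W x‖⁻¹ • (t • W x) = -ud x := by
          rw [hyn, smul_smul, habs]
          have hc : ((-t) * ‖W x‖)⁻¹ * t = -‖W x‖⁻¹ := by field_simp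
          rw [hc, neg_smul]
        have hif1 : ¬(0 < t ∧ t ≤ ‖W x‖⁻¹) := fun h => absurd h.1 (not_lt.2 htn.le)
        have ht2 : -‖W x‖⁻¹ ≤ t := by
          have h1 : -t ≤ ‖W x‖⁻¹ := by
            rw [← one_div, le_div_iff₀ hN]
            calc -t * ‖W x‖ = |t| * ‖W x‖ := by rw [habs]
              _ ≤ 1 := hlet
          linarith
        have hc2 : -‖W x‖⁻¹ ≤ t ∧ t < 0 := ⟨ht2, htn⟩
        have hΦval : Φ t x = dM x := by
          simp only [hΦdef, if_pos hc2, if_neg hif1, zero_add]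
        rw [hΦval, hval, harg, hdMdef, ← ENNReal.ofReal_mul (by positivity)]
        exact congrArg ENNReal.ofReal (realid |t| _ _ _ (abs_pos.2 ht))
      · -- t > 0
        have habs : |t| = t := abs_of_pos htp
        have harg : ‖t • W x‖⁻¹ • (t • W x) = ud x := by
          rw [hyn, smul_smul, habs]
          have hc : (t * ‖W x‖)⁻¹ * t = ‖W x‖⁻¹ := by field_simp
          rw [hc]
        have hif2 : ¬(-‖W x‖⁻¹ ≤ t ∧ t < 0) := fun h => absurd h.2 (not_lt.2 htp.le)
        have ht2 : t ≤ ‖W x‖⁻¹ := by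
          rw [← one_div, le_div_iff₀ hN]
          calc t * ‖W x‖ = |t| * ‖W x‖ := by rw [habs]
            _ ≤ 1 := hlet
        have hc2 : 0 < t ∧ t ≤ ‖W x‖⁻¹ := ⟨htp, ht2⟩
        have hΦval : Φ t x = dP x := by
          simp only [hΦdef, if_pos hc2, if_neg hif2, add_zero]
        rw [hΦval, hval, harg, hdPdef, ← ENNReal.ofReal_mul (by positivity)]
        exact congrArg ENNReal.ofReal (realid |t| _ _ _ (abs_pos.2 ht))
    · have hval : auxG m fX φ (t • W x) = 0 := by
        unfold auxG
        rw [if_neg (fun h => hle h.2)]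
      have hif1 : ¬(0 < t ∧ t ≤ ‖W x‖⁻¹) := by
        rintro ⟨h1, h2⟩
        apply hle
        rw [hyn, abs_of_pos h1]
        calc t * ‖W x‖ ≤ ‖W x‖⁻¹ * ‖W x‖ := mul_le_mul_of_nonneg_right h2 hN.le
          _ = 1 := inv_mul_cancel₀ (ne_of_gt hN)
      have hif2 : ¬(-‖W x‖⁻¹ ≤ t ∧ t < 0) := by
        rintro ⟨h1, h2⟩
        apply hle
        rw [hyn, abs_of_neg h2]
        calc -t * ‖W x‖ ≤ ‖W x‖⁻¹ * ‖W x‖ :=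
              mul_le_mul_of_nonneg_right (by linarith) hN.le
          _ = 1 := inv_mul_cancel₀ (ne_of_gt hN)
      simp only [hΦdef, if_neg hif1, if_neg hif2, hval, add_zero, ENNReal.ofReal_zero, mul_zero]
  have hae : ∀ᵐ t : ℝ, t ≠ 0 := by
    refine (ae_iff).2 ?_
    simpa using Real.volume_singleton
  have step2 : (∫⁻ t : ℝ, ∫⁻ x : Fin m → ℝ, ENNReal.ofReal
        (auxG m fX φ ((WithLp.equiv 2 (∀ _ : Fin (m + 1), ℝ)).symm (Fin.cons t x))))
      = ∫⁻ t : ℝ, ∫⁻ x, Φ t x := by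
    refine lintegral_congr_ae (hae.mono fun t ht => ?_)
    beta_reduce
    rw [key_sub (fun x => ENNReal.ofReal
        (auxG m fX φ ((WithLp.equiv 2 (∀ _ : Fin (m + 1), ℝ)).symm (Fin.cons t x))))
      (hψ.comp (hWt t)) t ht, ← lintegral_const_mul' _ _ ENNReal.ofReal_ne_top]
    refine lintegral_congr fun x => ?_
    rw [hsmul t x]
    exact hpoint t ht x
  have hΦunc : Measurable (Function.uncurry Φ) := by
    refine Measurable.add ?_ ?_
    · refine Measurable.ite ?_ (hdPmeas.comp measurable_snd) measurable_const
      exact (measurableSet_lt measurable_const measurable_fst).inter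
        (measurableSet_le measurable_fst ((hWmeas.comp measurable_snd).norm.inv))
    · refine Measurable.ite ?_ (hdMmeas.comp measurable_snd) measurable_const
      exact (measurableSet_le ((hWmeas.comp measurable_snd).norm.inv.neg) measurable_fst).inter
        (measurableSet_lt measurable_fst measurable_const)
  have step3 : (∫⁻ t : ℝ, ∫⁻ x, Φ t x) = ∫⁻ x, ∫⁻ t, Φ t x := by
    exact lintegral_lintegral_swap hΦunc.aemeasurable
  have step4 : ∀ x : Fin m → ℝ, (∫⁻ t : ℝ, Φ t x)
      = ENNReal.ofReal (fX (WithLp.toLp 2 (fun j => x j)) * φ (ud x)) / 2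
        + ENNReal.ofReal (fX (WithLp.toLp 2 (fun j => x j)) * φ (-ud x)) / 2 := by
    intro x
    have hN := hWnorm x
    have h1 : (∫⁻ t : ℝ, Φ t x)
        = (∫⁻ t : ℝ, (Set.Ioc (0:ℝ) ‖W x‖⁻¹).indicator (fun _ => dP x) t)
          + ∫⁻ t : ℝ, (Set.Ico (-‖W x‖⁻¹) (0:ℝ)).indicator (fun _ => dM x) t := by
      rw [← lintegral_add_left (measurable_const.indicator measurableSet_Ioc)]
      refine lintegral_congr fun t => ?_
      simp [hΦdef, Set.indicator_apply, Set.mem_Ioc, Set.mem_Ico]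
    rw [h1, lintegral_indicator measurableSet_Ioc, lintegral_indicator measurableSet_Ico,
      setLIntegral_const, setLIntegral_const, Real.volume_Ioc, Real.volume_Ico]
    have hvol : ENNReal.ofReal (‖W x‖⁻¹ - 0) = ENNReal.ofReal ‖W x‖⁻¹ := by norm_num
    have hvol2 : ENNReal.ofReal ((0:ℝ) - -‖W x‖⁻¹) = ENNReal.ofReal ‖W x‖⁻¹ := by norm_num
    rw [hvol, hvol2, hdPdef, hdMdef]
    have hcomb : ∀ a : ℝ, 0 ≤ a →
        ENNReal.ofReal (a * (‖W x‖ / 2)) * ENNReal.ofReal ‖W x‖⁻¹ = ENNReal.ofReal a / 2 := by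
      intro a ha
      rw [← ENNReal.ofReal_mul (by positivity)]
      have : a * (‖W x‖ / 2) * ‖W x‖⁻¹ = a / 2 := by
        field_simp
      rw [this, ENNReal.ofReal_div_of_pos (by norm_num)]
      norm_num
    rw [hcomb _ (mul_nonneg (hfX_nonneg _) (hφ0 _)), hcomb _ (mul_nonneg (hfX_nonneg _) (hφ0 _))]
  have step5 : (∫⁻ x : Fin m → ℝ, ∫⁻ t : ℝ, Φ t x)
      = (∫⁻ x : Fin m → ℝ, ENNReal.ofReal (fX (WithLp.toLp 2 (fun j => x j)) * φ (ud x))) / 2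
        + (∫⁻ x : Fin m → ℝ, ENNReal.ofReal (fX (WithLp.toLp 2 (fun j => x j)) * φ (-ud x))) / 2 := by
    rw [lintegral_congr step4]
    have hfud : Measurable fun x : Fin m → ℝ =>
        ENNReal.ofReal (fX (WithLp.toLp 2 (fun j => x j)) * φ (ud x)) :=
      (hfXpi.mul (hφ.comp hudmeas)).ennreal_ofReal
    rw [lintegral_add_left (hfud.div_const 2)]
    simp only [div_eq_mul_inv]
    rw [lintegral_mul_const' _ _ (by simp), lintegral_mul_const' _ _ (by simp)]
  have htrans : ∀ ρ : EuclideanSpace ℝ (Fin (m+1)) → ℝ, Measurable ρ →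
      (∫⁻ x : Fin m → ℝ, ENNReal.ofReal (fX (WithLp.toLp 2 (fun j => x j)) * ρ (ud x)))
        = ∫⁻ x : EuclideanSpace ℝ (Fin m), ENNReal.ofReal (fX x * ρ (auxDir m x)) := by
    intro ρ hρ
    have hmeasρ : Measurable fun x : Fin m → ℝ =>
        ENNReal.ofReal (fX (WithLp.toLp 2 (fun j => x j)) * ρ (ud x)) :=
      (hfXpi.mul (hρ.comp hudmeas)).ennreal_ofReal
    rw [← (EuclideanSpace.volume_preserving_symm_measurableEquiv_toLp (Fin m)).lintegral_comp hmeasρ]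
    exact lintegral_congr fun x => rfl
  have h2 := htrans (fun y => φ (-y)) (hφ.comp measurable_neg)
  simp only at h2
  rw [step1, step2, step3, step5, htrans φ hφ, h2]


lemma auxSphereInt (m : ℕ) (fX : EuclideanSpace ℝ (Fin m) → ℝ)
    (g : EuclideanSpace ℝ (Fin (m+1)) → ℝ) (y : EuclideanSpace ℝ (Fin (m+1)))
    (hy : ‖y‖ = 1) :
    ∫ r in Set.Ioi (0:ℝ), r ^ m * auxG m fX g (r • y)
      = g y * (if y 0 = 0 then 0
          else (2 * |y 0| ^ (m + 1))⁻¹ * fX (WithLp.toLp 2 (fun j : Fin m => y j.succ / y 0))) := by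
  classical
  by_cases h0 : y 0 = 0
  · have hz : ∀ r : ℝ, auxG m fX g (r • y) = 0 := by
      intro r
      unfold auxG
      rw [if_neg]
      rintro ⟨h1, -⟩
      exact h1 (by simp [PiLp.smul_apply, h0])
    simp [hz, if_pos h0]
  · set K : ℝ := g y * ((2 * |y 0| ^ (m + 1))⁻¹ * fX (WithLp.toLp 2 (fun j : Fin m => y j.succ / y 0))) with hK
    have hpt : Set.EqOn (fun r : ℝ => r ^ m * auxG m fX g (r • y))
        ((Set.Iic (1:ℝ)).indicator fun _ => K) (Set.Ioi 0) := by
      intro r hr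
      beta_reduce
      have hrpos : (0:ℝ) < r := hr
      have hsy0 : (r • y) 0 = r * y 0 := by simp [PiLp.smul_apply]
      have hsn : ‖r • y‖ = r := by
        rw [norm_smul, Real.norm_eq_abs, abs_of_pos hrpos, hy, mul_one]
      by_cases h1 : r ≤ 1
      · have hdir : ‖r • y‖⁻¹ • (r • y) = y := by
          rw [hsn, smul_smul, inv_mul_cancel₀ (ne_of_gt hrpos), one_smul]
        have hrat : WithLp.toLp 2 (fun j : Fin m => (r • y) j.succ / (r • y) 0)
            = WithLp.toLp 2 (fun j : Fin m => y j.succ / y 0) := by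
          congr 1
          funext j
          have hj : (r • y) j.succ = r * y j.succ := by simp [PiLp.smul_apply]
          rw [hj, hsy0, mul_div_mul_left _ _ (ne_of_gt hrpos)]
        have hcond : (r • y) 0 ≠ 0 ∧ ‖r • y‖ ≤ 1 := by
          refine ⟨?_, by rw [hsn]; exact h1⟩
          rw [hsy0]; exact mul_ne_zero (ne_of_gt hrpos) h0
        have hval : auxG m fX g (r • y)
            = g y * ((2 * (r * |y 0|) ^ (m+1))⁻¹ * fX (WithLp.toLp 2 (fun j : Fin m => y j.succ / y 0))) * r := by
          unfold auxG
          rw [if_pos hcond, hdir, hrat, hsy0, hsn, abs_mul, abs_of_pos hrpos]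
        rw [hval]
        have hmem : r ∈ Set.Iic (1:ℝ) := h1
        rw [Set.indicator_of_mem hmem, hK]
        have hb : |y 0| ≠ 0 := abs_ne_zero.2 h0
        have hrm : (r:ℝ) ^ (m+1) ≠ 0 := pow_ne_zero _ (ne_of_gt hrpos)
        have hbm : |y 0| ^ (m+1) ≠ 0 := pow_ne_zero _ hb
        field_simp [mul_pow]
        ring
      · have hcond : ¬((r • y) 0 ≠ 0 ∧ ‖r • y‖ ≤ 1) := by
          rintro ⟨-, hc⟩
          rw [hsn] at hc
          exact h1 hc
        have hval : auxG m fX g (r • y) = 0 := by unfold auxG; rw [if_neg hcond]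
        rw [hval, mul_zero, Set.indicator_of_notMem (by simpa using h1)]
    rw [setIntegral_congr_fun measurableSet_Ioi hpt,
      setIntegral_indicator measurableSet_Iic, Set.Ioi_inter_Iic, setIntegral_const,
      Real.volume_real_Ioc]
    simp [if_neg h0, hK]

/-- Writing `d = m + 1` with `m ≥ 1`: if `X` is a random vector in `ℝ^m = ℝ^{d−1}` with
Lebesgue density `f_X` and `ζ` is an independent Rademacher sign, then
`Θ = ζ (1, X)/‖(1, X)‖` has density `p(θ) = (2|θ₁|^d)⁻¹ f_X(θ₂/θ₁, …, θ_d/θ₁)` with respect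
to the surface measure `σ` on `S^{d−1}`, i.e. `E[g(Θ)] = ∫ g(θ) p(θ) dσ(θ)` for every
bounded measurable `g`. -/
theorem density_of_normalized_design
    (m : ℕ) (hm : 1 ≤ m)
    (Ω : Type*) [MeasurableSpace Ω] (P : Measure Ω) [IsProbabilityMeasure P]
    (X : Ω → EuclideanSpace ℝ (Fin m)) (hX : Measurable X)
    (fX : EuclideanSpace ℝ (Fin m) → ℝ) (hfX_meas : Measurable fX)
    (hfX_nonneg : ∀ x, 0 ≤ fX x)
    (hXdens : Measure.map X P = volume.withDensity (fun x => ENNReal.ofReal (fX x)))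
    (ζ : Ω → ℝ) (hζ : Measurable ζ)
    (hζ1 : P {ω | ζ ω = 1} = 1/2) (hζm1 : P {ω | ζ ω = -1} = 1/2)
    (hindep : ProbabilityTheory.IndepFun ζ X P)
    (Θ : Ω → EuclideanSpace ℝ (Fin (m + 1)))
    (hΘ : ∀ ω, Θ ω =
      (ζ ω / ‖(WithLp.equiv 2 (∀ _ : Fin (m + 1), ℝ)).symm
          (Fin.cons 1 (fun j => X ω j))‖) •
        (WithLp.equiv 2 (∀ _ : Fin (m + 1), ℝ)).symm (Fin.cons 1 (fun j => X ω j)))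
    (σm : Measure (Metric.sphere (0 : EuclideanSpace ℝ (Fin (m + 1))) 1))
    (hσ : ∀ g : EuclideanSpace ℝ (Fin (m + 1)) → ℝ, Integrable g →
      ∫ x, g x = ∫ θ : Metric.sphere (0 : EuclideanSpace ℝ (Fin (m + 1))) 1,
        (∫ r in Set.Ioi (0:ℝ), r ^ m * g (r • (θ : EuclideanSpace ℝ (Fin (m + 1))))) ∂σm)
    (g : EuclideanSpace ℝ (Fin (m + 1)) → ℝ) (hg_meas : Measurable g)
    (hg_bdd : ∃ C : ℝ, ∀ x, |g x| ≤ C) :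
    ∫ ω, g (Θ ω) ∂P
      = ∫ θ : Metric.sphere (0 : EuclideanSpace ℝ (Fin (m + 1))) 1,
          g θ *
            (if (θ : EuclideanSpace ℝ (Fin (m + 1))) 0 = 0 then 0
             else (2 * |(θ : EuclideanSpace ℝ (Fin (m + 1))) 0| ^ (m + 1))⁻¹ *
               fX (WithLp.toLp 2 (fun j : Fin m =>
                 (θ : EuclideanSpace ℝ (Fin (m + 1))) j.succ
                   / (θ : EuclideanSpace ℝ (Fin (m + 1))) 0))) ∂σm := by
  classical
  obtain ⟨C, hC⟩ := hg_bdd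
  have hC0 : 0 ≤ C := le_trans (abs_nonneg _) (hC 0)
  have hvmeas : Measurable (auxVec m) := by
    refine (MeasurableEquiv.toLp 2 (Fin (m+1) → ℝ)).measurable.comp
      (measurable_pi_lambda _ fun j => ?_)
    refine Fin.cases ?_ (fun i => ?_) j
    · simpa using measurable_const
    · simp
      exact (measurable_pi_apply i).comp
        (MeasurableEquiv.toLp 2 (Fin m → ℝ)).symm.measurable
  have humeas : Measurable (auxDir m) := (hvmeas.norm.inv).smul hvmeas
  set u := auxDir m with hu
  set gp : EuclideanSpace ℝ (Fin (m+1)) → ℝ := fun y => max (g y) 0 with hgp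
  set gm : EuclideanSpace ℝ (Fin (m+1)) → ℝ := fun y => max (-g y) 0 with hgm
  have hgpm : Measurable gp := hg_meas.max measurable_const
  have hgmm : Measurable gm := hg_meas.neg.max measurable_const
  have hgp0 : ∀ y, 0 ≤ gp y := fun y => le_max_right _ _
  have hgm0 : ∀ y, 0 ≤ gm y := fun y => le_max_right _ _
  have hgpC : ∀ y, gp y ≤ C := fun y => max_le ((le_abs_self _).trans (hC y)) hC0
  have hgmC : ∀ y, gm y ≤ C := fun y => max_le ((neg_le_abs _).trans (hC y)) hC0
  -- total mass of fX is 1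
  have hfX1 : ∫⁻ x : EuclideanSpace ℝ (Fin m), ENNReal.ofReal (fX x) = 1 := by
    have h1 : Measure.map X P Set.univ = 1 := by
      haveI : IsProbabilityMeasure (Measure.map X P) :=
        Measure.isProbabilityMeasure_map hX.aemeasurable
      exact measure_univ
    rw [hXdens] at h1
    rwa [withDensity_apply _ MeasurableSet.univ, setLIntegral_univ] at h1
  -- generic facts for bounded nonneg weights
  have hfacts : ∀ ρ : EuclideanSpace ℝ (Fin m) → ℝ, Measurable ρ → (∀ x, 0 ≤ ρ x) →
      (∀ x, ρ x ≤ C) →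
      (∫⁻ x, ENNReal.ofReal (fX x * ρ x)) ≠ ⊤ ∧ Integrable (fun x => fX x * ρ x) ∧
        ∫ x, fX x * ρ x = (∫⁻ x, ENNReal.ofReal (fX x * ρ x)).toReal := by
    intro ρ hρm hρ0 hρC
    have hle : (∫⁻ x, ENNReal.ofReal (fX x * ρ x)) ≤ ENNReal.ofReal C := by
      calc ∫⁻ x, ENNReal.ofReal (fX x * ρ x)
          ≤ ∫⁻ x, ENNReal.ofReal (fX x) * ENNReal.ofReal C := by
            refine lintegral_mono fun x => ?_
            rw [← ENNReal.ofReal_mul (hfX_nonneg x)]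
            exact ENNReal.ofReal_le_ofReal
              (mul_le_mul_of_nonneg_left (hρC x) (hfX_nonneg x))
        _ = ENNReal.ofReal C := by
            rw [lintegral_mul_const' _ _ ENNReal.ofReal_ne_top, hfX1, one_mul]
    have hne : (∫⁻ x, ENNReal.ofReal (fX x * ρ x)) ≠ ⊤ :=
      ne_top_of_le_ne_top ENNReal.ofReal_ne_top hle
    have hmeas : Measurable fun x => fX x * ρ x := hfX_meas.mul hρm
    have hnn : ∀ᵐ x : EuclideanSpace ℝ (Fin m) ∂volume, 0 ≤ fX x * ρ x :=
      ae_of_all _ fun x => mul_nonneg (hfX_nonneg x) (hρ0 x)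
    have hint : Integrable (fun x => fX x * ρ x) := by
      refine ⟨hmeas.aestronglyMeasurable, ?_⟩
      rw [hasFiniteIntegral_iff_ofReal hnn]
      exact lt_of_le_of_lt hle ENNReal.ofReal_lt_top
    exact ⟨hne, hint,
      by rw [integral_eq_lintegral_of_nonneg_ae hnn hmeas.aestronglyMeasurable]⟩
  have F1 := hfacts (fun x => gp (u x)) (hgpm.comp humeas)
    (fun x => hgp0 _) (fun x => hgpC _)
  have F2 := hfacts (fun x => gp (-u x)) (hgpm.comp humeas.neg)
    (fun x => hgp0 _) (fun x => hgpC _)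
  have F3 := hfacts (fun x => gm (u x)) (hgmm.comp humeas)
    (fun x => hgm0 _) (fun x => hgmC _)
  have F4 := hfacts (fun x => gm (-u x)) (hgmm.comp humeas.neg)
    (fun x => hgm0 _) (fun x => hgmC _)
  -- main volume identities
  have hGpmeas : Measurable (auxG m fX gp) := auxG_meas m fX hfX_meas gp hgpm
  have hGmmeas : Measurable (auxG m fX gm) := auxG_meas m fX hfX_meas gm hgmm
  have hGmeas : Measurable (auxG m fX g) := auxG_meas m fX hfX_meas g hg_meas
  have LP := auxVol hfX_meas hfX_nonneg hgpm hgp0 hGpmeas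
  have LM := auxVol hfX_meas hfX_nonneg hgmm hgm0 hGmmeas
  -- nonnegativity of auxG with nonneg weight
  have hGnn : ∀ (φ : EuclideanSpace ℝ (Fin (m+1)) → ℝ), (∀ y, 0 ≤ φ y) →
      ∀ y, 0 ≤ auxG m fX φ y := by
    intro φ hφ0 y
    unfold auxG
    split_ifs with h
    · have h2 : (0:ℝ) ≤ (2 * |y 0| ^ (m+1))⁻¹ := by positivity
      exact mul_nonneg (mul_nonneg (hφ0 _) (mul_nonneg h2 (hfX_nonneg _))) (norm_nonneg _)
    · exact le_refl 0
  have hGp_lt : (∫⁻ y, ENNReal.ofReal (auxG m fX gp y)) ≠ ⊤ := by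
    rw [LP]
    exact ENNReal.add_ne_top.2
      ⟨(ENNReal.div_lt_top F1.1 two_ne_zero).ne, (ENNReal.div_lt_top F2.1 two_ne_zero).ne⟩
  have hGm_lt : (∫⁻ y, ENNReal.ofReal (auxG m fX gm y)) ≠ ⊤ := by
    rw [LM]
    exact ENNReal.add_ne_top.2
      ⟨(ENNReal.div_lt_top F3.1 two_ne_zero).ne, (ENNReal.div_lt_top F4.1 two_ne_zero).ne⟩
  have hGp_int : Integrable (auxG m fX gp) := by
    refine ⟨hGpmeas.aestronglyMeasurable, ?_⟩
    rw [hasFiniteIntegral_iff_ofReal (ae_of_all _ (hGnn gp hgp0))]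
    exact lt_top_iff_ne_top.2 hGp_lt
  have hGm_int : Integrable (auxG m fX gm) := by
    refine ⟨hGmmeas.aestronglyMeasurable, ?_⟩
    rw [hasFiniteIntegral_iff_ofReal (ae_of_all _ (hGnn gm hgm0))]
    exact lt_top_iff_ne_top.2 hGm_lt
  have hGp_val : ∫ y, auxG m fX gp y
      = (∫ x, fX x * gp (u x)) / 2 + (∫ x, fX x * gp (-u x)) / 2 := by
    rw [integral_eq_lintegral_of_nonneg_ae (ae_of_all _ (hGnn gp hgp0))
      hGpmeas.aestronglyMeasurable, LP,
      ENNReal.toReal_add (ENNReal.div_lt_top F1.1 two_ne_zero).ne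
        (ENNReal.div_lt_top F2.1 two_ne_zero).ne,
      ENNReal.toReal_div, ENNReal.toReal_div, ← F1.2.2, ← F2.2.2]
    norm_num
  have hGm_val : ∫ y, auxG m fX gm y
      = (∫ x, fX x * gm (u x)) / 2 + (∫ x, fX x * gm (-u x)) / 2 := by
    rw [integral_eq_lintegral_of_nonneg_ae (ae_of_all _ (hGnn gm hgm0))
      hGmmeas.aestronglyMeasurable, LM,
      ENNReal.toReal_add (ENNReal.div_lt_top F3.1 two_ne_zero).ne
        (ENNReal.div_lt_top F4.1 two_ne_zero).ne,
      ENNReal.toReal_div, ENNReal.toReal_div, ← F3.2.2, ← F4.2.2]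
    norm_num
  -- split auxG for signed g
  have hGsplit : ∀ y, auxG m fX g y = auxG m fX gp y - auxG m fX gm y := by
    intro y
    unfold auxG
    split_ifs with h
    · rw [hgp, hgm, ← max_zero_sub_max_neg_zero_eq_self (g (‖y‖⁻¹ • y))]
      ring
    · ring
  have hG_int : Integrable (auxG m fX g) :=
    (hGp_int.sub hGm_int).congr (ae_of_all _ fun y => (hGsplit y).symm)
  have hG_val : ∫ y, auxG m fX g y = (∫ y, auxG m fX gp y) - ∫ y, auxG m fX gm y := by
    rw [← integral_sub hGp_int hGm_int]
    exact integral_congr_ae (ae_of_all _ hGsplit)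
  have hS1 : ∫ x, fX x * g (u x) = (∫ x, fX x * gp (u x)) - ∫ x, fX x * gm (u x) := by
    rw [← integral_sub F1.2.1 F3.2.1]
    refine integral_congr_ae (ae_of_all _ fun x => ?_)
    beta_reduce
    rw [hgp, hgm, ← max_zero_sub_max_neg_zero_eq_self (g (u x))]
    ring
  have hS2 : ∫ x, fX x * g (-u x) = (∫ x, fX x * gp (-u x)) - ∫ x, fX x * gm (-u x) := by
    rw [← integral_sub F2.2.1 F4.2.1]
    refine integral_congr_ae (ae_of_all _ fun x => ?_)
    beta_reduce
    rw [hgp, hgm, ← max_zero_sub_max_neg_zero_eq_self (g (-u x))]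
    ring
  -- probability side
  have hU1g : Measurable fun x : EuclideanSpace ℝ (Fin m) => g (u x) := hg_meas.comp humeas
  have hU2g : Measurable fun x : EuclideanSpace ℝ (Fin m) => g (-u x) :=
    hg_meas.comp humeas.neg
  set i1 : ℝ → ℝ := fun s => if s = 1 then 1 else 0 with hi1def
  set i2 : ℝ → ℝ := fun s => if s = -1 then 1 else 0 with hi2def
  have hi1 : Measurable i1 := measurable_const.ite (measurableSet_eq) measurable_const
  have hi2 : Measurable i2 := measurable_const.ite (measurableSet_eq) measurable_const
  have hsets : MeasurableSet {ω | ζ ω = 1} := hζ (measurableSet_singleton 1)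
  have htset : MeasurableSet {ω | ζ ω = -1} := hζ (measurableSet_singleton (-1))
  have hdisj : Disjoint {ω | ζ ω = 1} {ω | ζ ω = -1} := by
    rw [Set.disjoint_left]
    intro ω h1 h2
    simp only [Set.mem_setOf_eq] at h1 h2
    rw [h1] at h2
    norm_num at h2
  have hunion : P ({ω | ζ ω = 1} ∪ {ω | ζ ω = -1}) = 1 := by
    rw [measure_union hdisj htset, hζ1, hζm1, ENNReal.add_halves]
  have haes : ∀ᵐ ω ∂P, ζ ω = 1 ∨ ζ ω = -1 := by
    rw [ae_iff]
    have hc : {ω | ¬(ζ ω = 1 ∨ ζ ω = -1)} = ({ω | ζ ω = 1} ∪ {ω | ζ ω = -1})ᶜ := by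
      ext ω; simp [not_or]
    rw [hc, measure_compl (hsets.union htset) (measure_ne_top _ _), hunion, measure_univ,
      tsub_self]
  have key1 : ∫ ω, g (Θ ω) ∂P
      = ∫ ω, (i1 (ζ ω) * g (u (X ω)) + i2 (ζ ω) * g (-u (X ω))) ∂P := by
    refine integral_congr_ae (haes.mono fun ω hω => ?_)
    beta_reduce
    have hθω : Θ ω = (ζ ω / ‖auxVec m (X ω)‖) • auxVec m (X ω) := hΘ ω
    rcases hω with h | h
    · rw [hθω, h, one_div]
      simp only [hi1def, hi2def]
      norm_num
      rfl
    · rw [hθω, h, neg_div, one_div, neg_smul]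
      simp only [hi1def, hi2def]
      norm_num
      rfl
  have hI1 : Integrable (fun ω => i1 (ζ ω) * g (u (X ω))) P := by
    refine Integrable.mono' (integrable_const C)
      (((hi1.comp hζ).mul (hU1g.comp hX)).aestronglyMeasurable)
      (ae_of_all _ fun ω => ?_)
    rw [Real.norm_eq_abs, abs_mul]
    have h1 : |i1 (ζ ω)| ≤ 1 := by
      simp only [hi1def]; split_ifs <;> norm_num
    calc |i1 (ζ ω)| * |g (u (X ω))| ≤ 1 * C :=
          mul_le_mul h1 (hC _) (abs_nonneg _) zero_le_one
      _ = C := one_mul C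
  have hI2 : Integrable (fun ω => i2 (ζ ω) * g (-u (X ω))) P := by
    refine Integrable.mono' (integrable_const C)
      (((hi2.comp hζ).mul (hU2g.comp hX)).aestronglyMeasurable)
      (ae_of_all _ fun ω => ?_)
    rw [Real.norm_eq_abs, abs_mul]
    have h1 : |i2 (ζ ω)| ≤ 1 := by
      simp only [hi2def]; split_ifs <;> norm_num
    calc |i2 (ζ ω)| * |g (-u (X ω))| ≤ 1 * C :=
          mul_le_mul h1 (hC _) (abs_nonneg _) zero_le_one
      _ = C := one_mul C
  have hprod1 : ∫ ω, i1 (ζ ω) * g (u (X ω)) ∂P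
      = (∫ ω, i1 (ζ ω) ∂P) * ∫ ω, g (u (X ω)) ∂P :=
    ProbabilityTheory.IndepFun.integral_fun_mul_eq_mul_integral (hindep.comp hi1 hU1g)
      ((hi1.comp hζ).aestronglyMeasurable) ((hU1g.comp hX).aestronglyMeasurable)
  have hprod2 : ∫ ω, i2 (ζ ω) * g (-u (X ω)) ∂P
      = (∫ ω, i2 (ζ ω) ∂P) * ∫ ω, g (-u (X ω)) ∂P :=
    ProbabilityTheory.IndepFun.integral_fun_mul_eq_mul_integral (hindep.comp hi2 hU2g)
      ((hi2.comp hζ).aestronglyMeasurable) ((hU2g.comp hX).aestronglyMeasurable)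
  have hint1 : ∫ ω, i1 (ζ ω) ∂P = 1/2 := by
    have hfeq : (fun ω => i1 (ζ ω))
        = Set.indicator {ω | ζ ω = 1} (fun _ => (1:ℝ)) := by
      funext ω
      simp [hi1def, Set.indicator_apply]
    rw [hfeq, integral_indicator_const (1:ℝ) hsets, measureReal_def, hζ1]
    simp [ENNReal.toReal_div]
  have hint2 : ∫ ω, i2 (ζ ω) ∂P = 1/2 := by
    have hfeq : (fun ω => i2 (ζ ω))
        = Set.indicator {ω | ζ ω = -1} (fun _ => (1:ℝ)) := by
      funext ω
      simp [hi2def, Set.indicator_apply]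
    rw [hfeq, integral_indicator_const (1:ℝ) htset, measureReal_def, hζm1]
    simp [ENNReal.toReal_div]
  have hmap : ∀ h : EuclideanSpace ℝ (Fin m) → ℝ, Measurable h →
      ∫ ω, h (X ω) ∂P = ∫ x, fX x * h x := by
    intro h hh
    rw [← integral_map hX.aemeasurable hh.aestronglyMeasurable, hXdens]
    have hd : (fun x : EuclideanSpace ℝ (Fin m) => ENNReal.ofReal (fX x))
        = fun x => ((fX x).toNNReal : ENNReal) := rfl
    rw [hd, integral_withDensity_eq_integral_smul hfX_meas.real_toNNReal]
    refine integral_congr_ae (ae_of_all _ fun x => ?_)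
    beta_reduce
    rw [NNReal.smul_def, Real.coe_toNNReal _ (hfX_nonneg x), smul_eq_mul]
  have step1 : ∫ ω, g (Θ ω) ∂P
      = (∫ x, fX x * g (u x)) / 2 + (∫ x, fX x * g (-u x)) / 2 := by
    rw [key1, integral_add hI1 hI2, hprod1, hprod2, hint1, hint2,
      hmap _ hU1g, hmap _ hU2g]
    ring
  -- apply coarea hypothesis
  have hform := hσ (auxG m fX g) hG_int
  have hsph : (∫ θ : Metric.sphere (0 : EuclideanSpace ℝ (Fin (m + 1))) 1,
        (∫ r in Set.Ioi (0:ℝ), r ^ m * auxG m fX g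
          (r • (θ : EuclideanSpace ℝ (Fin (m + 1))))) ∂σm)
      = ∫ θ : Metric.sphere (0 : EuclideanSpace ℝ (Fin (m + 1))) 1,
          g θ *
            (if (θ : EuclideanSpace ℝ (Fin (m + 1))) 0 = 0 then 0
             else (2 * |(θ : EuclideanSpace ℝ (Fin (m + 1))) 0| ^ (m + 1))⁻¹ *
               fX (WithLp.toLp 2 (fun j : Fin m =>
                 (θ : EuclideanSpace ℝ (Fin (m + 1))) j.succ
                   / (θ : EuclideanSpace ℝ (Fin (m + 1))) 0))) ∂σm := by
    refine integral_congr_ae (ae_of_all _ fun θ => ?_)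
    exact auxSphereInt m fX g θ (mem_sphere_zero_iff_norm.mp θ.2)
  rw [step1, ← hsph, ← hform, hG_val, hGp_val, hGm_val, hS1, hS2]
  ring
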